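/- The function W̃(F) = h(|Fv|, |Fw|, det F) on real 2×2 matrices is polyconvex: there exists a convex function Φ : ℝ^{2×2} × ℝ → ℝ such that W̃(F) = Φ(F, det F) for every F ∈ ℝ^{2×2}, where v = (1,1)/√2 and w = (1,−1)/√2. -/

import Mathlib

set_option maxHeartbeats 1000000


open Matrix

noncomputable section

def vvec : Fin 2 → ℝ := ![1 / Real.sqrt 2, 1 / Real.sqrt 2]

def wvec : Fin 2 → ℝ := ![1 / Real.sqrt 2, -(1 / Real.sqrt 2)]

def xF (F : Matrix (Fin 2) (Fin 2) ℝ) : ℝ := Real.sqrt (∑ i, (F.mulVec vvec i) ^ 2)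

def yF (F : Matrix (Fin 2) (Fin 2) ℝ) : ℝ := Real.sqrt (∑ i, (F.mulVec wvec i) ^ 2)

def Afun (l x y d : ℝ) : ℝ :=
  (x ^ 2 + y ^ 2) * (l ^ 2 + 1 / l ^ 2) / 2
    + (l ^ 2 - 1 / l ^ 2) * Real.sqrt (x ^ 2 * y ^ 2 - d ^ 2) + 2 * d

def gfun (l x y d : ℝ) : ℝ :=
  x ^ 2 + y ^ 2 + (l ^ 2 + 1 / l ^ 2) - 2 * Real.sqrt (Afun l x y d)

def hfun (l x y d : ℝ) : ℝ :=
  sInf {r | ∃ ξ η : ℝ, x ≤ ξ ∧ y ≤ η ∧ r = gfun l ξ η d}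

/-- The relaxed energy density `W̃(F) = h(|Fv|, |Fw|, det F)`. -/
def Wtilde (l : ℝ) (F : Matrix (Fin 2) (Fin 2) ℝ) : ℝ := hfun l (xF F) (yF F) F.det

/-! ### Auxiliary development -/

/-- The objective in the convex variables `S = u + v`, `Q`, `d`. -/
def Ffun (l S Q d : ℝ) : ℝ :=
  S + (l ^ 2 + 1 / l ^ 2)
    - 2 * Real.sqrt (S * (l ^ 2 + 1 / l ^ 2) / 2 + (l ^ 2 - 1 / l ^ 2) * Q + 2 * d)

/-- Convex feasible-set description of the relaxed energy. -/
def hset (l x y d : ℝ) : Set ℝ :=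
  {r | ∃ u v Q : ℝ, x ^ 2 ≤ u ∧ y ^ 2 ≤ v ∧ 0 ≤ Q ∧ Q ^ 2 + d ^ 2 ≤ u * v ∧
    r = Ffun l (u + v) Q d}

def hprime (l x y d : ℝ) : ℝ := sInf (hset l x y d)

lemma l_facts {l : ℝ} (hl : 1 < l) :
    0 < l ∧ 2 ≤ l ^ 2 + 1 / l ^ 2 ∧ 0 ≤ l ^ 2 - 1 / l ^ 2 := by
  have hl0 : (0:ℝ) < l := lt_trans one_pos hl
  have h1 : l * (1 / l) = 1 := mul_one_div_cancel (ne_of_gt hl0)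
  have h2 : (1:ℝ) ≤ l ^ 2 := by nlinarith
  have h3 : l ^ 2 * (1 / l ^ 2) = 1 := mul_one_div_cancel (by positivity)
  have h4 : 1 / l ^ 2 ≤ 1 := by nlinarith [sq_nonneg (1 / l)]
  refine ⟨hl0, ?_, ?_⟩
  · nlinarith [sq_nonneg (l - 1 / l), sq_nonneg (l + 1 / l)]
  · nlinarith

/-- `a ≤ b` from `a² ≤ b²` and `0 ≤ b`. -/
lemma le_of_sq_le_sq' {a b : ℝ} (h : a ^ 2 ≤ b ^ 2) (hb : 0 ≤ b) : a ≤ b := by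
  calc a ≤ |a| := le_abs_self a
    _ = Real.sqrt (a ^ 2) := (Real.sqrt_sq_eq_abs a).symm
    _ ≤ Real.sqrt (b ^ 2) := Real.sqrt_le_sqrt h
    _ = b := Real.sqrt_sq hb

/-- Concavity of `Real.sqrt` on nonnegative reals, combination form. -/
lemma sqrt_concave_comb {a b t s : ℝ} (ha : 0 ≤ a) (hb : 0 ≤ b)
    (ht : 0 ≤ t) (hs : 0 ≤ s) (hts : t + s = 1) :
    t * Real.sqrt a + s * Real.sqrt b ≤ Real.sqrt (t * a + s * b) := by
  obtain rfl : s = 1 - t := by linarith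
  obtain ⟨sa, hsa0, rfl⟩ : ∃ sa, 0 ≤ sa ∧ a = sa ^ 2 :=
    ⟨Real.sqrt a, Real.sqrt_nonneg a, (Real.sq_sqrt ha).symm⟩
  obtain ⟨sb, hsb0, rfl⟩ : ∃ sb, 0 ≤ sb ∧ b = sb ^ 2 :=
    ⟨Real.sqrt b, Real.sqrt_nonneg b, (Real.sq_sqrt hb).symm⟩
  rw [Real.sqrt_sq hsa0, Real.sqrt_sq hsb0]
  have h1 : (t * sa + (1 - t) * sb) ^ 2 ≤ t * sa ^ 2 + (1 - t) * sb ^ 2 := by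
    nlinarith [mul_nonneg (mul_nonneg ht hs) (sq_nonneg (sa - sb))]
  calc t * sa + (1 - t) * sb
      = Real.sqrt ((t * sa + (1 - t) * sb) ^ 2) := (Real.sqrt_sq (by positivity)).symm
    _ ≤ Real.sqrt (t * sa ^ 2 + (1 - t) * sb ^ 2) := Real.sqrt_le_sqrt h1

/-- Nonnegativity of the inner linear form on the feasible set. -/
lemma ell_nonneg {l u v Q d : ℝ} (hl : 1 < l) (hu : 0 ≤ u) (hv : 0 ≤ v)
    (hQ : 0 ≤ Q) (huv : Q ^ 2 + d ^ 2 ≤ u * v) :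
    0 ≤ (u + v) * (l ^ 2 + 1 / l ^ 2) / 2 + (l ^ 2 - 1 / l ^ 2) * Q + 2 * d := by
  obtain ⟨hl0, hL, hM⟩ := l_facts hl
  have hS : 2 * |d| ≤ u + v := by
    nlinarith [abs_nonneg d, sq_abs d, sq_nonneg (u - v), sq_nonneg Q, add_nonneg hu hv]
  have hd : -d ≤ |d| := neg_le_abs d
  nlinarith [mul_nonneg hM hQ, mul_nonneg (add_nonneg hu hv) (by linarith : (0:ℝ) ≤ l ^ 2 + 1 / l ^ 2 - 2)]

/-- Lower bound for elements of `hset`. -/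
lemma lb_of_mem {l x y d r : ℝ} (hl : 1 < l) (hr : r ∈ hset l x y d) :
    1 / l ^ 2 - 2 * Real.sqrt (2 * |d|) ≤ r := by
  obtain ⟨hl0, hL, hM⟩ := l_facts hl
  obtain ⟨u, v, Q, hu, hv, hQ, huv, rfl⟩ := hr
  have hu0 : 0 ≤ u := le_trans (sq_nonneg x) hu
  have hv0 : 0 ≤ v := le_trans (sq_nonneg y) hv
  have hS0 : 0 ≤ u + v := add_nonneg hu0 hv0
  have hQS : 2 * Q ≤ u + v := by
    nlinarith [sq_nonneg (u - v), sq_nonneg d]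
  have habs : 2 * d ≤ 2 * |d| := by
    have := le_abs_self d; linarith
  have hinner_le : (u + v) * (l ^ 2 + 1 / l ^ 2) / 2 + (l ^ 2 - 1 / l ^ 2) * Q + 2 * d
      ≤ (u + v) * l ^ 2 + 2 * |d| := by
    nlinarith [mul_nonneg hM (by linarith : 0 ≤ u + v - 2 * Q)]
  have hs2 : (0:ℝ) ≤ 2 * |d| := by positivity
  have hsqS := Real.sqrt_nonneg (u + v)
  have hsq2 := Real.sqrt_nonneg (2 * |d|)
  have hS2 : Real.sqrt (u + v) ^ 2 = u + v := Real.sq_sqrt hS0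
  have h22 : Real.sqrt (2 * |d|) ^ 2 = 2 * |d| := Real.sq_sqrt hs2
  have hb : (u + v) * l ^ 2 + 2 * |d| ≤ (l * Real.sqrt (u + v) + Real.sqrt (2 * |d|)) ^ 2 := by
    nlinarith [mul_nonneg (mul_nonneg (le_of_lt hl0) hsqS) hsq2]
  have h2 : Real.sqrt ((u + v) * (l ^ 2 + 1 / l ^ 2) / 2 + (l ^ 2 - 1 / l ^ 2) * Q + 2 * d)
      ≤ l * Real.sqrt (u + v) + Real.sqrt (2 * |d|) := by
    calc Real.sqrt ((u + v) * (l ^ 2 + 1 / l ^ 2) / 2 + (l ^ 2 - 1 / l ^ 2) * Q + 2 * d)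
        ≤ Real.sqrt ((u + v) * l ^ 2 + 2 * |d|) := Real.sqrt_le_sqrt hinner_le
      _ ≤ Real.sqrt ((l * Real.sqrt (u + v) + Real.sqrt (2 * |d|)) ^ 2) := Real.sqrt_le_sqrt hb
      _ = l * Real.sqrt (u + v) + Real.sqrt (2 * |d|) := Real.sqrt_sq (by positivity)
  unfold Ffun
  nlinarith [sq_nonneg (Real.sqrt (u + v) - l)]

lemma hset_nonempty (l x y d : ℝ) : (hset l x y d).Nonempty := by
  refine ⟨Ffun l ((x ^ 2 + |d| + 1) + (y ^ 2 + |d| + 1)) 0 d,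
    x ^ 2 + |d| + 1, y ^ 2 + |d| + 1, 0, by nlinarith [abs_nonneg d], by nlinarith [abs_nonneg d],
    le_refl 0, ?_, rfl⟩
  nlinarith [abs_nonneg d, sq_abs d, sq_nonneg x, sq_nonneg y]

lemma hset_bddBelow {l : ℝ} (hl : 1 < l) (x y d : ℝ) : BddBelow (hset l x y d) :=
  ⟨1 / l ^ 2 - 2 * Real.sqrt (2 * |d|), fun _ hr => lb_of_mem hl hr⟩

/-- On the cone `x*y ≥ |d|`, `hfun` coincides with the convex description `hprime`. -/
lemma hfun_eq_hprime {l x y d : ℝ} (hl : 1 < l) (hx : 0 ≤ x) (hy : 0 ≤ y)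
    (hd : |d| ≤ x * y) : hfun l x y d = hprime l x y d := by
  obtain ⟨hl0, hL, hM⟩ := l_facts hl
  have hWsub : {r | ∃ ξ η : ℝ, x ≤ ξ ∧ y ≤ η ∧ r = gfun l ξ η d} ⊆ hset l x y d := by
    rintro r ⟨ξ, η, hξ, hη, rfl⟩
    have hξ0 : 0 ≤ ξ := hx.trans hξ
    have hη0 : 0 ≤ η := hy.trans hη
    have hdξη : |d| ≤ ξ * η := le_trans hd (mul_le_mul hξ hη hy hξ0)
    have hd2 : d ^ 2 ≤ ξ ^ 2 * η ^ 2 := by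
      nlinarith [abs_nonneg d, sq_abs d]
    refine ⟨ξ ^ 2, η ^ 2, Real.sqrt (ξ ^ 2 * η ^ 2 - d ^ 2),
      by nlinarith, by nlinarith, Real.sqrt_nonneg _, ?_, ?_⟩
    · rw [Real.sq_sqrt (by linarith)]; linarith
    · rfl
  have hbddh : BddBelow (hset l x y d) := hset_bddBelow hl x y d
  have hbddW : BddBelow {r | ∃ ξ η : ℝ, x ≤ ξ ∧ y ≤ η ∧ r = gfun l ξ η d} :=
    hbddh.mono hWsub
  have hWne : Set.Nonempty {r | ∃ ξ η : ℝ, x ≤ ξ ∧ y ≤ η ∧ r = gfun l ξ η d} :=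
    ⟨gfun l x y d, x, y, le_refl _, le_refl _, rfl⟩
  unfold hfun hprime
  apply le_antisymm
  · apply le_csInf (hset_nonempty l x y d)
    rintro r ⟨u, v, Q, hu, hv, hQ, huv, rfl⟩
    have hu0 : 0 ≤ u := le_trans (sq_nonneg x) hu
    have hv0 : 0 ≤ v := le_trans (sq_nonneg y) hv
    have hxu : x ≤ Real.sqrt u := by
      calc x = Real.sqrt (x ^ 2) := (Real.sqrt_sq hx).symm
        _ ≤ Real.sqrt u := Real.sqrt_le_sqrt hu
    have hyv : y ≤ Real.sqrt v := by
      calc y = Real.sqrt (y ^ 2) := (Real.sqrt_sq hy).symm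
        _ ≤ Real.sqrt v := Real.sqrt_le_sqrt hv
    have hgF : gfun l (Real.sqrt u) (Real.sqrt v) d ≤ Ffun l (u + v) Q d := by
      unfold gfun Afun Ffun
      rw [Real.sq_sqrt hu0, Real.sq_sqrt hv0]
      have hQle : Q ≤ Real.sqrt (u * v - d ^ 2) := by
        calc Q = Real.sqrt (Q ^ 2) := (Real.sqrt_sq hQ).symm
          _ ≤ Real.sqrt (u * v - d ^ 2) := Real.sqrt_le_sqrt (by linarith)
      have hmono : (u + v) * (l ^ 2 + 1 / l ^ 2) / 2 + (l ^ 2 - 1 / l ^ 2) * Q + 2 * d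
          ≤ (u + v) * (l ^ 2 + 1 / l ^ 2) / 2
            + (l ^ 2 - 1 / l ^ 2) * Real.sqrt (u * v - d ^ 2) + 2 * d := by
        have := mul_le_mul_of_nonneg_left hQle hM
        linarith
      have := Real.sqrt_le_sqrt hmono
      linarith
    calc sInf {r | ∃ ξ η : ℝ, x ≤ ξ ∧ y ≤ η ∧ r = gfun l ξ η d}
        ≤ gfun l (Real.sqrt u) (Real.sqrt v) d :=
          csInf_le hbddW ⟨Real.sqrt u, Real.sqrt v, hxu, hyv, rfl⟩
      _ ≤ Ffun l (u + v) Q d := hgF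
  · exact csInf_le_csInf hbddh hWne hWsub

/-- Cauchy–Schwarz-type cross inequality for the rotated cone constraint. -/
lemma cross_ineq {u₁ v₁ Q₁ d₁ u₂ v₂ Q₂ d₂ : ℝ} (hu₁ : 0 ≤ u₁) (hv₁ : 0 ≤ v₁)
    (hu₂ : 0 ≤ u₂) (hv₂ : 0 ≤ v₂) (h₁ : Q₁ ^ 2 + d₁ ^ 2 ≤ u₁ * v₁)
    (h₂ : Q₂ ^ 2 + d₂ ^ 2 ≤ u₂ * v₂) :
    2 * (Q₁ * Q₂ + d₁ * d₂) ≤ u₁ * v₂ + u₂ * v₁ := by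
  have hprod : (Q₁ ^ 2 + d₁ ^ 2) * (Q₂ ^ 2 + d₂ ^ 2) ≤ (u₁ * v₁) * (u₂ * v₂) :=
    mul_le_mul h₁ h₂ (by positivity) (mul_nonneg hu₁ hv₁)
  have hc : (Q₁ * Q₂ + d₁ * d₂) ^ 2 ≤ (u₁ * v₂) * (u₂ * v₁) := by
    nlinarith [sq_nonneg (Q₁ * d₂ - Q₂ * d₁)]
  have ha : 0 ≤ u₁ * v₂ := mul_nonneg hu₁ hv₂
  have hb : 0 ≤ u₂ * v₁ := mul_nonneg hu₂ hv₁
  have h4 : (2 * (Q₁ * Q₂ + d₁ * d₂)) ^ 2 ≤ (u₁ * v₂ + u₂ * v₁) ^ 2 := by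
    nlinarith [sq_nonneg (u₁ * v₂ - u₂ * v₁)]
  exact le_of_sq_le_sq' h4 (by linarith)

/-- Joint convexity of `hprime` in `(x, y, d)`. -/
lemma hprime_convex {l : ℝ} (hl : 1 < l) (x₁ y₁ d₁ x₂ y₂ d₂ t s : ℝ)
    (ht : 0 ≤ t) (hs : 0 ≤ s) (hts : t + s = 1) :
    hprime l (t * x₁ + s * x₂) (t * y₁ + s * y₂) (t * d₁ + s * d₂)
      ≤ t * hprime l x₁ y₁ d₁ + s * hprime l x₂ y₂ d₂ := by
  obtain ⟨hl0, hL, hM⟩ := l_facts hl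
  obtain rfl : s = 1 - t := by linarith
  have hs1 : (0:ℝ) ≤ 1 - t := hs
  apply le_of_forall_pos_le_add
  intro ε hε
  obtain ⟨r₁, hr₁mem, hr₁⟩ :=
    Real.lt_sInf_add_pos (hset_nonempty l x₁ y₁ d₁) (half_pos hε)
  obtain ⟨r₂, hr₂mem, hr₂⟩ :=
    Real.lt_sInf_add_pos (hset_nonempty l x₂ y₂ d₂) (half_pos hε)
  obtain ⟨u₁, v₁, Q₁, hu₁, hv₁, hQ₁, huv₁, hre₁⟩ := hr₁mem
  obtain ⟨u₂, v₂, Q₂, hu₂, hv₂, hQ₂, huv₂, hre₂⟩ := hr₂mem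
  have hu₁0 : 0 ≤ u₁ := le_trans (sq_nonneg x₁) hu₁
  have hv₁0 : 0 ≤ v₁ := le_trans (sq_nonneg y₁) hv₁
  have hu₂0 : 0 ≤ u₂ := le_trans (sq_nonneg x₂) hu₂
  have hv₂0 : 0 ≤ v₂ := le_trans (sq_nonneg y₂) hv₂
  -- the combined feasible point
  have hcross := cross_ineq hu₁0 hv₁0 hu₂0 hv₂0 huv₁ huv₂
  have hfeas : (t * Q₁ + (1 - t) * Q₂) ^ 2 + (t * d₁ + (1 - t) * d₂) ^ 2
      ≤ (t * u₁ + (1 - t) * u₂) * (t * v₁ + (1 - t) * v₂) := by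
    nlinarith [mul_le_mul_of_nonneg_left huv₁ (sq_nonneg t),
      mul_le_mul_of_nonneg_left huv₂ (sq_nonneg (1 - t)),
      mul_le_mul_of_nonneg_left hcross (mul_nonneg ht hs1), sq_nonneg t, ht, hs1]
  have hmemc : Ffun l ((t * u₁ + (1 - t) * u₂) + (t * v₁ + (1 - t) * v₂)) (t * Q₁ + (1 - t) * Q₂)
      (t * d₁ + (1 - t) * d₂) ∈ hset l (t * x₁ + (1 - t) * x₂) (t * y₁ + (1 - t) * y₂) (t * d₁ + (1 - t) * d₂) := by
    refine ⟨t * u₁ + (1 - t) * u₂, t * v₁ + (1 - t) * v₂, t * Q₁ + (1 - t) * Q₂, ?_, ?_, ?_, hfeas, rfl⟩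
    · nlinarith [mul_nonneg (mul_nonneg ht hs1) (sq_nonneg (x₁ - x₂)),
        mul_le_mul_of_nonneg_left hu₁ ht, mul_le_mul_of_nonneg_left hu₂ hs1]
    · nlinarith [mul_nonneg (mul_nonneg ht hs1) (sq_nonneg (y₁ - y₂)),
        mul_le_mul_of_nonneg_left hv₁ ht, mul_le_mul_of_nonneg_left hv₂ hs1]
    · exact add_nonneg (mul_nonneg ht hQ₁) (mul_nonneg hs1 hQ₂)
  -- convexity of the objective
  have hell₁ := ell_nonneg hl hu₁0 hv₁0 hQ₁ huv₁
  have hell₂ := ell_nonneg hl hu₂0 hv₂0 hQ₂ huv₂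
  have hobj : Ffun l ((t * u₁ + (1 - t) * u₂) + (t * v₁ + (1 - t) * v₂)) (t * Q₁ + (1 - t) * Q₂)
      (t * d₁ + (1 - t) * d₂) ≤ t * r₁ + (1 - t) * r₂ := by
    rw [hre₁, hre₂]
    unfold Ffun
    have hlin : ((t * u₁ + (1 - t) * u₂) + (t * v₁ + (1 - t) * v₂)) * (l ^ 2 + 1 / l ^ 2) / 2
        + (l ^ 2 - 1 / l ^ 2) * (t * Q₁ + (1 - t) * Q₂) + 2 * (t * d₁ + (1 - t) * d₂)
        = t * ((u₁ + v₁) * (l ^ 2 + 1 / l ^ 2) / 2 + (l ^ 2 - 1 / l ^ 2) * Q₁ + 2 * d₁)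
          + (1 - t) * ((u₂ + v₂) * (l ^ 2 + 1 / l ^ 2) / 2 + (l ^ 2 - 1 / l ^ 2) * Q₂ + 2 * d₂) := by
      ring
    rw [hlin]
    have hconc := sqrt_concave_comb hell₁ hell₂ ht hs1 (by ring)
    nlinarith [hconc]
  have hle : hprime l (t * x₁ + (1 - t) * x₂) (t * y₁ + (1 - t) * y₂) (t * d₁ + (1 - t) * d₂)
      ≤ t * r₁ + (1 - t) * r₂ :=
    le_trans (csInf_le (hset_bddBelow hl _ _ _) hmemc) hobj
  have ht1 : t * r₁ ≤ t * (hprime l x₁ y₁ d₁ + ε / 2) :=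
    mul_le_mul_of_nonneg_left (le_of_lt hr₁) ht
  have ht2 : (1 - t) * r₂ ≤ (1 - t) * (hprime l x₂ y₂ d₂ + ε / 2) :=
    mul_le_mul_of_nonneg_left (le_of_lt hr₂) hs1
  nlinarith [hle, ht1, ht2, hε]

/-- Monotonicity of `hprime` in the first variable. -/
lemma hprime_mono_x {l : ℝ} (hl : 1 < l) {x x' : ℝ} (hx : 0 ≤ x) (hxx : x ≤ x')
    (y d : ℝ) : hprime l x y d ≤ hprime l x' y d := by
  apply csInf_le_csInf (hset_bddBelow hl x y d) (hset_nonempty l x' y d)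
  rintro r ⟨u, v, Q, hu, hv, hQ, huv, rfl⟩
  exact ⟨u, v, Q, le_trans (by nlinarith : x ^ 2 ≤ x' ^ 2) hu, hv, hQ, huv, rfl⟩

/-- Monotonicity of `hprime` in the second variable. -/
lemma hprime_mono_y {l : ℝ} (hl : 1 < l) {y y' : ℝ} (hy : 0 ≤ y) (hyy : y ≤ y')
    (x d : ℝ) : hprime l x y d ≤ hprime l x y' d := by
  apply csInf_le_csInf (hset_bddBelow hl x y d) (hset_nonempty l x y' d)
  rintro r ⟨u, v, Q, hu, hv, hQ, huv, rfl⟩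
  exact ⟨u, v, Q, hu, le_trans (by nlinarith : y ^ 2 ≤ y' ^ 2) hv, hQ, huv, rfl⟩

/-- Triangle-type inequality for the Euclidean "norm" on `Fin 2 → ℝ`. -/
lemma sqrtsum_comb {t s : ℝ} (ht : 0 ≤ t) (hs : 0 ≤ s) (u w : Fin 2 → ℝ) :
    Real.sqrt (∑ i, (t • u + s • w) i ^ 2)
      ≤ t * Real.sqrt (∑ i, u i ^ 2) + s * Real.sqrt (∑ i, w i ^ 2) := by
  simp only [Fin.sum_univ_two, Pi.add_apply, Pi.smul_apply, smul_eq_mul]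
  set na := Real.sqrt (u 0 ^ 2 + u 1 ^ 2) with hna_def
  set nb := Real.sqrt (w 0 ^ 2 + w 1 ^ 2) with hnb_def
  have hna0 : 0 ≤ na := Real.sqrt_nonneg _
  have hnb0 : 0 ≤ nb := Real.sqrt_nonneg _
  have hna : na ^ 2 = u 0 ^ 2 + u 1 ^ 2 := Real.sq_sqrt (by positivity)
  have hnb : nb ^ 2 = w 0 ^ 2 + w 1 ^ 2 := Real.sq_sqrt (by positivity)
  have hdot : u 0 * w 0 + u 1 * w 1 ≤ na * nb := by
    apply le_of_sq_le_sq' _ (mul_nonneg hna0 hnb0)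
    have hnanb : (na * nb) ^ 2 = (u 0 ^ 2 + u 1 ^ 2) * (w 0 ^ 2 + w 1 ^ 2) := by
      rw [mul_pow, hna, hnb]
    nlinarith [sq_nonneg (u 0 * w 1 - u 1 * w 0)]
  have key : (t * u 0 + s * w 0) ^ 2 + (t * u 1 + s * w 1) ^ 2 ≤ (t * na + s * nb) ^ 2 := by
    have e1 : t ^ 2 * na ^ 2 = t ^ 2 * (u 0 ^ 2 + u 1 ^ 2) := by rw [hna]
    have e2 : s ^ 2 * nb ^ 2 = s ^ 2 * (w 0 ^ 2 + w 1 ^ 2) := by rw [hnb]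
    nlinarith [mul_nonneg (mul_nonneg ht hs) (sub_nonneg.mpr hdot), e1, e2]
  calc Real.sqrt ((t * u 0 + s * w 0) ^ 2 + (t * u 1 + s * w 1) ^ 2)
      ≤ Real.sqrt ((t * na + s * nb) ^ 2) := Real.sqrt_le_sqrt key
    _ = t * na + s * nb := Real.sqrt_sq (by positivity)

lemma xF_comb {t s : ℝ} (ht : 0 ≤ t) (hs : 0 ≤ s) (F G : Matrix (Fin 2) (Fin 2) ℝ) :
    xF (t • F + s • G) ≤ t * xF F + s * xF G := by
  unfold xF
  have hmv : (t • F + s • G).mulVec vvec = t • F.mulVec vvec + s • G.mulVec vvec := by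
    rw [Matrix.add_mulVec, Matrix.smul_mulVec, Matrix.smul_mulVec]
  rw [hmv]
  exact sqrtsum_comb ht hs _ _

lemma yF_comb {t s : ℝ} (ht : 0 ≤ t) (hs : 0 ≤ s) (F G : Matrix (Fin 2) (Fin 2) ℝ) :
    yF (t • F + s • G) ≤ t * yF F + s * yF G := by
  unfold yF
  have hmv : (t • F + s • G).mulVec wvec = t • F.mulVec wvec + s • G.mulVec wvec := by
    rw [Matrix.add_mulVec, Matrix.smul_mulVec, Matrix.smul_mulVec]
  rw [hmv]
  exact sqrtsum_comb ht hs _ _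

lemma xF_nonneg (F : Matrix (Fin 2) (Fin 2) ℝ) : 0 ≤ xF F := Real.sqrt_nonneg _

lemma yF_nonneg (F : Matrix (Fin 2) (Fin 2) ℝ) : 0 ≤ yF F := Real.sqrt_nonneg _

/-- Hadamard/Cauchy–Schwarz: `|det F| ≤ |Fv| * |Fw|`. -/
lemma det_le_xF_yF (F : Matrix (Fin 2) (Fin 2) ℝ) : |F.det| ≤ xF F * yF F := by
  set c : ℝ := 1 / Real.sqrt 2 with hc_def
  have h2 : Real.sqrt 2 * Real.sqrt 2 = 2 := Real.mul_self_sqrt (by norm_num)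
  have hs2 : Real.sqrt 2 ≠ 0 := by
    intro h
    rw [h] at h2; norm_num at h2
  have hc : c * c = 1 / 2 := by
    rw [hc_def]
    field_simp
    rw [Real.sq_sqrt (by norm_num : (0:ℝ) ≤ 2)]
  have ha0 : F.mulVec vvec 0 = (F 0 0 + F 0 1) * c := by
    simp [Matrix.mulVec, dotProduct, vvec, Fin.sum_univ_two, hc_def]
    ring
  have ha1 : F.mulVec vvec 1 = (F 1 0 + F 1 1) * c := by
    simp [Matrix.mulVec, dotProduct, vvec, Fin.sum_univ_two, hc_def]
    ring
  have hb0 : F.mulVec wvec 0 = (F 0 0 - F 0 1) * c := by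
    simp [Matrix.mulVec, dotProduct, wvec, Fin.sum_univ_two, hc_def]
    ring
  have hb1 : F.mulVec wvec 1 = (F 1 0 - F 1 1) * c := by
    simp [Matrix.mulVec, dotProduct, wvec, Fin.sum_univ_two, hc_def]
    ring
  have hdet : F.det = F 0 0 * F 1 1 - F 0 1 * F 1 0 := Matrix.det_fin_two F
  set a0 := F.mulVec vvec 0
  set a1 := F.mulVec vvec 1
  set b0 := F.mulVec wvec 0
  set b1 := F.mulVec wvec 1
  have hcross : a0 * b1 - a1 * b0 = -F.det := by
    rw [ha0, ha1, hb0, hb1, hdet]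
    linear_combination ((F 0 0 + F 0 1) * (F 1 0 - F 1 1)
      - (F 1 0 + F 1 1) * (F 0 0 - F 0 1)) * hc
  have hx2 : xF F ^ 2 = a0 ^ 2 + a1 ^ 2 := by
    unfold xF
    rw [Fin.sum_univ_two]
    exact Real.sq_sqrt (by positivity)
  have hy2 : yF F ^ 2 = b0 ^ 2 + b1 ^ 2 := by
    unfold yF
    rw [Fin.sum_univ_two]
    exact Real.sq_sqrt (by positivity)
  have hCS : F.det ^ 2 ≤ (xF F * yF F) ^ 2 := by
    have h1 : (a0 * b1 - a1 * b0) ^ 2 ≤ (a0 ^ 2 + a1 ^ 2) * (b0 ^ 2 + b1 ^ 2) := by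
      nlinarith [sq_nonneg (a0 * b0 + a1 * b1)]
    calc F.det ^ 2 = (a0 * b1 - a1 * b0) ^ 2 := by rw [hcross]; ring
      _ ≤ (a0 ^ 2 + a1 ^ 2) * (b0 ^ 2 + b1 ^ 2) := h1
      _ = (xF F * yF F) ^ 2 := by rw [mul_pow, hx2, hy2]
  calc |F.det| = Real.sqrt (F.det ^ 2) := (Real.sqrt_sq_eq_abs _).symm
    _ ≤ Real.sqrt ((xF F * yF F) ^ 2) := Real.sqrt_le_sqrt hCS
    _ = xF F * yF F := Real.sqrt_sq (mul_nonneg (xF_nonneg F) (yF_nonneg F))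

/-- `W̃` is polyconvex: there is a convex `Φ` on `ℝ^{2×2} × ℝ` with
`W̃(F) = Φ(F, det F)`. -/
theorem Wtilde_polyconvex (l : ℝ) (hl : 1 < l) :
    ∃ Φ : Matrix (Fin 2) (Fin 2) ℝ × ℝ → ℝ, ConvexOn ℝ Set.univ Φ ∧
      ∀ F : Matrix (Fin 2) (Fin 2) ℝ, Wtilde l F = Φ (F, F.det) := by
  refine ⟨fun p => hprime l (xF p.1) (yF p.1) p.2, ⟨convex_univ, ?_⟩, ?_⟩
  · intro p _ q _ a b ha hb hab
    simp only [smul_eq_mul]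
    have h1 : (a • p + b • q).1 = a • p.1 + b • q.1 := rfl
    have h2 : (a • p + b • q).2 = a * p.2 + b * q.2 := rfl
    have hxc : xF (a • p.1 + b • q.1) ≤ a * xF p.1 + b * xF q.1 := xF_comb ha hb _ _
    have hyc : yF (a • p.1 + b • q.1) ≤ a * yF p.1 + b * yF q.1 := yF_comb ha hb _ _
    have hax : 0 ≤ a * xF p.1 + b * xF q.1 := by
      have := xF_nonneg p.1; have := xF_nonneg q.1; positivity
    have hay : 0 ≤ a * yF p.1 + b * yF q.1 := by
      have := yF_nonneg p.1; have := yF_nonneg q.1; positivity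
    calc hprime l (xF (a • p + b • q).1) (yF (a • p + b • q).1) (a • p + b • q).2
        = hprime l (xF (a • p.1 + b • q.1)) (yF (a • p.1 + b • q.1)) (a * p.2 + b * q.2) := by
          rw [h1, h2]
      _ ≤ hprime l (a * xF p.1 + b * xF q.1) (yF (a • p.1 + b • q.1)) (a * p.2 + b * q.2) :=
          hprime_mono_x hl (xF_nonneg _) hxc _ _
      _ ≤ hprime l (a * xF p.1 + b * xF q.1) (a * yF p.1 + b * yF q.1) (a * p.2 + b * q.2) :=
          hprime_mono_y hl (yF_nonneg _) hyc _ _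
      _ ≤ a * hprime l (xF p.1) (yF p.1) p.2 + b * hprime l (xF q.1) (yF q.1) q.2 :=
          hprime_convex hl _ _ _ _ _ _ a b ha hb hab
  · intro F
    exact hfun_eq_hprime hl (xF_nonneg F) (yF_nonneg F) (det_le_xF_yF F)
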